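/- Define g(ψ) = (R² − 1)·(2 + c² − R²)/(c² + 1) with c² = (1+cos ψ)/(2cos(ψ/4) − cos ψ + 1) and R² = (1+cos ψ)/(2cos(ψ/4) + cos ψ − 1). Then g(ψ) > 0 for ψ ∈ (0, 2π/3) and g(0) = g(2π/3) = 0. -/

import Mathlib

/-- g(ψ) = (R² − 1)(2 + c² − R²)/(c² + 1), with c² = (1+cos ψ)/(2cos(ψ/4) − cos ψ + 1)
and R² = (1+cos ψ)/(2cos(ψ/4) + cos ψ − 1), is positive on (0, 2π/3) and
vanishes at ψ = 0 and ψ = 2π/3. -/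
theorem stmt9 (g : ℝ → ℝ)
    (hg : ∀ ψ, g ψ =
      ((1 + Real.cos ψ) / (2 * Real.cos (ψ / 4) + Real.cos ψ - 1) - 1) *
        (2 + (1 + Real.cos ψ) / (2 * Real.cos (ψ / 4) - Real.cos ψ + 1) -
          (1 + Real.cos ψ) / (2 * Real.cos (ψ / 4) + Real.cos ψ - 1)) /
        ((1 + Real.cos ψ) / (2 * Real.cos (ψ / 4) - Real.cos ψ + 1) + 1)) :
    (∀ ψ ∈ Set.Ioo 0 (2 * Real.pi / 3), 0 < g ψ) ∧ g 0 = 0 ∧ g (2 * Real.pi / 3) = 0 := by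
  have hs3 : Real.sqrt 3 ^ 2 = 3 := Real.sq_sqrt (by norm_num)
  have hs3' : (1.7 : ℝ) < Real.sqrt 3 := by
    nlinarith [Real.sqrt_nonneg 3, hs3]
  have hs3'' : Real.sqrt 3 < 2 := by nlinarith [Real.sqrt_nonneg 3, hs3]
  refine ⟨?_, ?_, ?_⟩
  · rintro ψ ⟨h0, h1⟩
    set u := Real.cos (ψ / 4) with hu
    have hpi : (0:ℝ) < Real.pi := Real.pi_pos
    have hq1 : ψ / 4 < Real.pi / 6 := by linarith
    have hq0 : 0 < ψ / 4 := by linarith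
    have hu1 : u < 1 := by
      have := Real.cos_lt_cos_of_nonneg_of_le_pi (le_refl 0) (by linarith) hq0
      simpa [hu] using this
    have hu2 : Real.sqrt 3 / 2 < u := by
      have := Real.cos_lt_cos_of_nonneg_of_le_pi hq0.le (by linarith) hq1
      rw [Real.cos_pi_div_six] at this
      exact this
    have hu0 : 0 < u := by nlinarith
    have hcos : Real.cos ψ = 2*(2*u^2-1)^2 - 1 := by
      have h4 : ψ = 2*(2*(ψ/4)) := by ring
      rw [h4, Real.cos_two_mul, Real.cos_two_mul, ← hu]
    have hB : 0 < 1 + 4*u^3 - 4*u := by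
      nlinarith [sq_nonneg (2*u - Real.sqrt 3), sq_nonneg (u - 1)]
    have hA : 0 < 1 + 4*u - 4*u^3 := by nlinarith
    have h43 : 0 < 4*u^2 - 3 := by nlinarith
    have hDp : 0 < 2 * u + Real.cos ψ - 1 := by rw [hcos]; nlinarith
    have hDm : 0 < 2 * u - Real.cos ψ + 1 := by rw [hcos]; nlinarith
    have hX : 0 ≤ 1 + Real.cos ψ := by rw [hcos]; nlinarith [sq_nonneg (2*u^2-1)]
    rw [hg]
    apply div_pos
    · apply mul_pos
      · rw [sub_pos, one_lt_div hDp, hcos]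
        nlinarith
      · have e : 2 + (1 + Real.cos ψ) / (2 * u - Real.cos ψ + 1) -
            (1 + Real.cos ψ) / (2 * u + Real.cos ψ - 1) =
            2*(4*u^2-3)/((1+4*u-4*u^3)*(1+4*u^3-4*u)) := by
          rw [hcos]
          have n1 : (2*u - (2*(2*u^2-1)^2-1) + 1) ≠ 0 := by nlinarith
          have n2 : (2*u + (2*(2*u^2-1)^2-1) - 1) ≠ 0 := by nlinarith
          rw [eq_div_iff (mul_ne_zero hA.ne' hB.ne')]
          field_simp
          ring
        rw [e]
        positivity
    · have : 0 ≤ (1 + Real.cos ψ) / (2 * u - Real.cos ψ + 1) := div_nonneg hX hDm.le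
      linarith
  · rw [hg]
    norm_num
  · have hc : Real.cos (2 * Real.pi / 3) = -(1/2) := by
      have : 2 * Real.pi / 3 = Real.pi - Real.pi / 3 := by ring
      rw [this, Real.cos_pi_sub, Real.cos_pi_div_three]
    have hc4 : Real.cos (2 * Real.pi / 3 / 4) = Real.sqrt 3 / 2 := by
      have : 2 * Real.pi / 3 / 4 = Real.pi / 6 := by ring
      rw [this, Real.cos_pi_div_six]
    rw [hg, hc, hc4]
    have h1 : Real.sqrt 3 - 3/2 ≠ 0 := by nlinarith
    have h2 : Real.sqrt 3 + 3/2 ≠ 0 := by nlinarith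
    have e : 2 + (1 + -(1/2)) / (2 * (Real.sqrt 3 / 2) - -(1/2) + 1) -
        (1 + -(1/2)) / (2 * (Real.sqrt 3 / 2) + -(1/2) - 1) = 0 := by
      have e1 : 2 * (Real.sqrt 3 / 2) - -(1/2) + 1 = Real.sqrt 3 + 3/2 := by ring
      have e2 : 2 * (Real.sqrt 3 / 2) + -(1/2) - 1 = Real.sqrt 3 - 3/2 := by ring
      rw [e1, e2]
      have h1' : Real.sqrt 3 * 2 - 3 ≠ 0 := by nlinarith
      have h2' : Real.sqrt 3 * 2 + 3 ≠ 0 := by nlinarith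
      have h3' : 2 * Real.sqrt 3 - 3 ≠ 0 := by nlinarith
      field_simp
      ring_nf
      rw [hs3]
      ring
    rw [e]
    simp
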